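/- Let p and q be distinct primes with q ≡ 1 (mod p), let m be an element of multiplicative order p in (Z/q)ˣ, and let λ be an integer with λ ≢ −1 (mod p). Let G = Z/p ⋉ (Z/q × Z/q) be the semidirect product in which the generator g of Z/p acts on Z/q × Z/q by g·(i,j) = (m·i, m^λ·j). Then H²(G, kˣ) = 0; that is, every 2-cocycle on G with values in kˣ is a coboundary. -/

import Mathlib

/-- A 2-cocycle on a group `G` with values in `kˣ` (trivial action). -/
def IsCocycle2 {k : Type*} [Field k] {G : Type*} [Group G] (β : G → G → kˣ) : Prop :=
  ∀ x y z : G, β y z * β x (y * z) = β (x * y) z * β x y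

/-- A 2-coboundary on a group `G` with values in `kˣ`. -/
def IsCoboundary2 {k : Type*} [Field k] {G : Type*} [Group G] (β : G → G → kˣ) : Prop :=
  ∃ f : G → kˣ, ∀ x y : G, β x y = f x * f y * (f (x * y))⁻¹

structure NC (k : Type*) [Field k] (G : Type*) [Group G] where
  β : G → G → kˣ
  coc : ∀ x y z : G, β y z * β x (y * z) = β (x * y) z * β x y
  norm : β 1 1 = 1

namespace NC
variable {k : Type*} [Field k] {G : Type*} [Group G] (c : NC k G)

lemma one_left (x : G) : c.β 1 x = 1 := by
  have h := c.coc 1 1 x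
  simp only [one_mul, c.norm] at h
  exact mul_left_cancel (a := c.β 1 x) (by rw [h, mul_one])

lemma one_right (x : G) : c.β x 1 = 1 := by
  have h := c.coc x 1 1
  simp only [mul_one, c.norm, one_mul] at h
  exact mul_right_cancel (b := c.β x 1) (by rw [← h, one_mul])

lemma inv_symm (x : G) : c.β x⁻¹ x = c.β x x⁻¹ := by
  have h := c.coc x x⁻¹ x
  simp only [inv_mul_cancel, mul_inv_cancel, c.one_left, c.one_right, mul_one, one_mul] at h
  exact h

/-- The twisted central extension `kˣ ×_β G`. -/
@[ext]
structure Ext (c : NC k G) where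
  u : kˣ
  x : G

instance : Group c.Ext where
  mul e f := ⟨e.u * f.u * c.β e.x f.x, e.x * f.x⟩
  one := ⟨1, 1⟩
  inv e := ⟨(e.u * c.β e.x e.x⁻¹)⁻¹, e.x⁻¹⟩
  mul_assoc e f g := by
    refine Ext.ext ?_ (mul_assoc _ _ _)
    show e.u * f.u * c.β e.x f.x * g.u * c.β (e.x * f.x) g.x
        = e.u * (f.u * g.u * c.β f.x g.x) * c.β e.x (f.x * g.x)
    have h := c.coc e.x f.x g.x
    have h' : (c.β f.x g.x : k) * c.β e.x (f.x * g.x) = c.β (e.x * f.x) g.x * c.β e.x f.x := by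
      exact_mod_cast congrArg Units.val h
    ext
    push_cast
    linear_combination (-(e.u * f.u * g.u : k)) * h'
  one_mul e := by
    refine Ext.ext ?_ (one_mul _)
    show (1 : kˣ) * e.u * c.β 1 e.x = e.u
    rw [c.one_left, one_mul, mul_one]
  mul_one e := by
    refine Ext.ext ?_ (mul_one _)
    show e.u * 1 * c.β e.x 1 = e.u
    rw [c.one_right, mul_one, mul_one]
  inv_mul_cancel e := by
    refine Ext.ext ?_ (inv_mul_cancel _)
    show (e.u * c.β e.x e.x⁻¹)⁻¹ * e.u * c.β e.x⁻¹ e.x = 1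
    rw [c.inv_symm]
    group

@[simp] lemma mul_def (u v : kˣ) (x y : G) :
    (⟨u, x⟩ * ⟨v, y⟩ : c.Ext) = ⟨u * v * c.β x y, x * y⟩ := rfl

@[simp] lemma mul_u (e f : c.Ext) : (e * f).u = e.u * f.u * c.β e.x f.x := rfl
@[simp] lemma mul_x (e f : c.Ext) : (e * f).x = e.x * f.x := rfl
@[simp] lemma one_u : (1 : c.Ext).u = 1 := rfl
@[simp] lemma one_x : (1 : c.Ext).x = 1 := rfl

/-- The projection `Ext →* G`. -/
def π : c.Ext →* G where
  toFun e := e.x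
  map_one' := rfl
  map_mul' _ _ := rfl

@[simp] lemma π_apply (e : c.Ext) : c.π e = e.x := rfl

/-- The central inclusion `kˣ →* Ext`. -/
def ι : kˣ →* c.Ext where
  toFun u := ⟨u, 1⟩
  map_one' := rfl
  map_mul' u v := by
    refine Ext.ext ?_ (one_mul _).symm
    show u * v = u * v * c.β 1 1
    rw [c.norm, mul_one]

@[simp] lemma ι_u (u : kˣ) : (c.ι u).u = u := rfl
@[simp] lemma ι_x (u : kˣ) : (c.ι u).x = 1 := rfl

lemma ι_central (u : kˣ) (e : c.Ext) : c.ι u * e = e * c.ι u := by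
  refine Ext.ext ?_ (by simp)
  simp [c.one_left, c.one_right, mul_comm]

/-- If the normalized extension splits, β is a coboundary. -/
lemma isCoboundary_of_splits (s : G →* c.Ext) (hs : ∀ x, (s x).x = x) :
    IsCoboundary2 c.β := by
  refine ⟨fun x => ((s x).u)⁻¹, fun x y => ?_⟩
  have h : s x * s y = s (x * y) := (map_mul s x y).symm
  have h1 : (s x).u * (s y).u * c.β (s x).x (s y).x = (s (x*y)).u := congrArg Ext.u h
  rw [hs x, hs y] at h1
  simp only
  rw [← h1]
  simp [mul_assoc, mul_comm, mul_left_comm]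


end NC

/-- If `x^n = 1` and `a ≡ b [MOD n]` then `x^a = x^b`. -/
lemma pow_congr_of_modEq {M : Type*} [LeftCancelMonoid M] {x : M} {n a b : ℕ}
    (hx : x ^ n = 1) (h : a ≡ b [MOD n]) : x ^ a = x ^ b :=
  pow_eq_pow_iff_modEq.mpr (h.of_dvd (orderOf_dvd_of_pow_eq_one hx))

namespace NC
variable {k : Type*} [Field k] {G : Type*} [Group G] (c : NC k G)

lemma eq_iota_of_x_eq_one {e : c.Ext} (h : e.x = 1) : e = c.ι e.u :=
  Ext.ext rfl h

lemma exists_iota_mul {e f : c.Ext} (h : e.x = f.x) : ∃ μ : kˣ, e = c.ι μ * f := by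
  refine ⟨(e * f⁻¹).u, ?_⟩
  have hx : (e * f⁻¹).x = 1 := by
    have : (e * f⁻¹).x = e.x * f.x⁻¹ := by
      have := congrArg (c.π) (rfl : e * f⁻¹ = e * f⁻¹)
      simp only [map_mul, map_inv, π_apply] at this ⊢
      calc (e * f⁻¹).x = c.π (e * f⁻¹) := rfl
        _ = e.x * (f.x)⁻¹ := by rw [map_mul, map_inv]; rfl
    rw [this, h, mul_inv_cancel]
  calc e = (e * f⁻¹) * f := by group
    _ = c.ι (e * f⁻¹).u * f := by rw [← c.eq_iota_of_x_eq_one hx]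

lemma iota_mul_pow (u : kˣ) (e : c.Ext) (n : ℕ) :
    (c.ι u * e) ^ n = c.ι (u ^ n) * e ^ n := by
  have hc : Commute (c.ι u) e := c.ι_central u e
  rw [hc.mul_pow, map_pow]

lemma exists_pow_eq [IsAlgClosed k] (_c : NC k G) (n : ℕ) (hn : 0 < n) (u : kˣ) : ∃ v : kˣ, v ^ n = u := by
  obtain ⟨z, hz⟩ := IsAlgClosed.exists_pow_nat_eq (u : k) hn
  have hz0 : z ≠ 0 := by
    intro h; rw [h, zero_pow hn.ne'] at hz; exact u.ne_zero hz.symm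
  exact ⟨Units.mk0 z hz0, Units.ext (by simp [hz])⟩

lemma ι_eq_one_iff (u : kˣ) : c.ι u = 1 ↔ u = 1 := by
  constructor
  · intro h; exact congrArg Ext.u h
  · intro h; rw [h, map_one]

/-- Lift an element of order dividing `n` to an element of order dividing `n`. -/
lemma exists_good_lift [IsAlgClosed k] (n : ℕ) (hn : 0 < n) (x : G) (hx : x ^ n = 1) :
    ∃ e : c.Ext, e.x = x ∧ e ^ n = 1 := by
  set e₀ : c.Ext := ⟨1, x⟩ with he₀
  have hpow : (e₀ ^ n).x = 1 := by
    have : (e₀ ^ n).x = (e₀.x) ^ n := by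
      calc (e₀ ^ n).x = c.π (e₀ ^ n) := rfl
        _ = (c.π e₀) ^ n := map_pow _ _ _
        _ = (e₀.x) ^ n := rfl
    rw [this, he₀, hx]
  have h1 : e₀ ^ n = c.ι ((e₀ ^ n).u) := c.eq_iota_of_x_eq_one hpow
  obtain ⟨v, hv⟩ := c.exists_pow_eq n hn ((e₀ ^ n).u)⁻¹
  refine ⟨c.ι v * e₀, by simp [he₀], ?_⟩
  rw [c.iota_mul_pow, h1, ← map_mul, hv, inv_mul_cancel, map_one]

/-- Adjust a lift by a scalar to make the conjugation relation exact (case `r ≥ 2`). -/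
lemma adjust_conj [IsAlgClosed k] (q r : ℕ) (hq : q.Prime) (hr2 : 2 ≤ r)
    (hrq : ¬ q ∣ (r - 1)) (g' x' : c.Ext) (hxq : x' ^ q = 1) (μ : kˣ)
    (hconj : g' * x' * g'⁻¹ = c.ι μ * x' ^ r) :
    ∃ y : c.Ext, y.x = x'.x ∧ y ^ q = 1 ∧ g' * y * g'⁻¹ = y ^ r := by
  haveI : Fact q.Prime := ⟨hq⟩
  haveI : NeZero q := ⟨hq.ne_zero⟩
  -- μ ^ q = 1
  have hμq : μ ^ q = 1 := by
    have h1 : (g' * x' * g'⁻¹) ^ q = 1 := by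
      rw [conj_pow, hxq, mul_one, mul_inv_cancel]
    rw [hconj, c.iota_mul_pow, ← pow_mul, mul_comm r q, pow_mul, hxq, one_pow, mul_one] at h1
    exact (c.ι_eq_one_iff _).mp h1
  -- find the exponent e with e * (r - 1) ≡ 1 [MOD q]
  have hcast : ((r - 1 : ℕ) : ZMod q) ≠ 0 := by
    rw [Ne, ZMod.natCast_eq_zero_iff]
    exact hrq
  set w : ZMod q := ((r - 1 : ℕ) : ZMod q)⁻¹ with hw
  have hkey : w.val * (r - 1) ≡ 1 [MOD q] := by
    have : ((w.val * (r - 1) : ℕ) : ZMod q) = ((1 : ℕ) : ZMod q) := by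
      push_cast
      rw [ZMod.natCast_val, ZMod.cast_id, hw, inv_mul_cancel₀ hcast]
    exact (ZMod.natCast_eq_natCast_iff _ _ _).mp this
  set t : kˣ := μ ^ w.val with ht
  have htq : t ^ q = 1 := by rw [ht, ← pow_mul, mul_comm, pow_mul, hμq, one_pow]
  have htr : t ^ (r - 1) = μ := by
    rw [ht, ← pow_mul]
    calc μ ^ (w.val * (r - 1)) = μ ^ 1 := pow_congr_of_modEq hμq hkey
      _ = μ := pow_one μ
  have h2 : t * μ = t ^ r := by
    rw [show r = (r - 1) + 1 by omega, pow_succ, htr, mul_comm]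
  refine ⟨c.ι t * x', by simp, ?_, ?_⟩
  · rw [c.iota_mul_pow, htq, map_one, one_mul, hxq]
  · have hcen : g' * (c.ι t * x') * g'⁻¹ = c.ι t * (g' * x' * g'⁻¹) := by
      calc g' * (c.ι t * x') * g'⁻¹ = g' * c.ι t * x' * g'⁻¹ := by group
        _ = c.ι t * g' * x' * g'⁻¹ := by rw [← c.ι_central t g']
        _ = c.ι t * (g' * x' * g'⁻¹) := by group
    rw [hcen, hconj, ← mul_assoc, ← map_mul, h2, c.iota_mul_pow]

/-- When the conjugation exponent is trivial, the scalar obstruction vanishes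
(coprimality of `p` and `q`). -/
lemma conj_eq_self (p q : ℕ) (hpq : Nat.Coprime p q)
    (g' x' : c.Ext) (hg : g' ^ p = 1) (hxq : x' ^ q = 1) (μ : kˣ)
    (hconj : g' * x' * g'⁻¹ = c.ι μ * x') : g' * x' * g'⁻¹ = x' := by
  have hμq : μ ^ q = 1 := by
    have h1 : (g' * x' * g'⁻¹) ^ q = 1 := by
      rw [conj_pow, hxq, mul_one, mul_inv_cancel]
    rw [hconj, c.iota_mul_pow, hxq, mul_one] at h1
    exact (c.ι_eq_one_iff _).mp h1
  have hiter : ∀ j : ℕ, g' ^ j * x' * (g' ^ j)⁻¹ = c.ι (μ ^ j) * x' := by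
    intro j
    induction j with
    | zero => simp
    | succ n ih =>
      calc g' ^ (n + 1) * x' * (g' ^ (n + 1))⁻¹
          = g' * (g' ^ n * x' * (g' ^ n)⁻¹) * g'⁻¹ := by group
        _ = g' * (c.ι (μ ^ n) * x') * g'⁻¹ := by rw [ih]
        _ = c.ι (μ ^ n) * (g' * x' * g'⁻¹) := by
            calc g' * (c.ι (μ ^ n) * x') * g'⁻¹ = g' * c.ι (μ ^ n) * x' * g'⁻¹ := by group
              _ = c.ι (μ ^ n) * g' * x' * g'⁻¹ := by rw [← c.ι_central]
              _ = c.ι (μ ^ n) * (g' * x' * g'⁻¹) := by group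
        _ = c.ι (μ ^ n) * (c.ι μ * x') := by rw [hconj]
        _ = c.ι (μ ^ (n + 1)) * x' := by rw [← mul_assoc, ← map_mul, ← pow_succ]
  have hμp : μ ^ p = 1 := by
    have h := hiter p
    rw [hg, one_mul, inv_one, mul_one] at h
    have h2 : (1 : c.Ext) * x' = c.ι (μ ^ p) * x' := by rw [one_mul]; exact h
    exact (c.ι_eq_one_iff _).mp (mul_right_cancel h2).symm
  have hμ1 : μ = 1 := by
    have hd : orderOf μ ∣ Nat.gcd p q :=
      Nat.dvd_gcd (orderOf_dvd_of_pow_eq_one hμp) (orderOf_dvd_of_pow_eq_one hμq)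
    rw [hpq] at hd
    rw [← orderOf_eq_one_iff]
    exact Nat.dvd_one.mp hd
  rw [hconj, hμ1, map_one, one_mul]

@[simp] lemma inv_x (e : c.Ext) : (e⁻¹).x = e.x⁻¹ := rfl

@[simp] lemma pow_x (e : c.Ext) (n : ℕ) : (e ^ n).x = e.x ^ n := by
  induction n with
  | zero => rw [pow_zero, pow_zero]; rfl
  | succ j ih => rw [pow_succ, pow_succ, mul_x, ih]

lemma ι_injective : Function.Injective c.ι := fun _ _ h => congrArg Ext.u h

lemma ι_shuffle (u : kˣ) (e f : c.Ext) : e * (c.ι u * f) = c.ι u * (e * f) := by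
  rw [← mul_assoc, ← c.ι_central u e, mul_assoc]

lemma comm_aux (a' b' : c.Ext) (ν : kˣ) (h : a' * b' = c.ι ν * (b' * a')) :
    ∀ j : ℕ, a' * b' ^ j = c.ι (ν ^ j) * (b' ^ j * a') := by
  intro j
  induction j with
  | zero => simp
  | succ n ih =>
    calc a' * b' ^ (n + 1) = (a' * b' ^ n) * b' := by rw [pow_succ, mul_assoc]
      _ = c.ι (ν ^ n) * (b' ^ n * a') * b' := by rw [ih]
      _ = c.ι (ν ^ n) * (b' ^ n * (a' * b')) := by group
      _ = c.ι (ν ^ n) * (b' ^ n * (c.ι ν * (b' * a'))) := by rw [h]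
      _ = c.ι (ν ^ n) * (c.ι ν * (b' ^ n * (b' * a'))) := by rw [c.ι_shuffle ν (b' ^ n)]
      _ = c.ι (ν ^ (n + 1)) * (b' ^ (n + 1) * a') := by
            rw [← mul_assoc, ← map_mul, pow_succ']
            congr 1
            · rw [mul_comm]
            · rw [pow_succ']; group

lemma comm_aux2 (a' b' : c.Ext) (ν : kˣ) (h : a' * b' = c.ι ν * (b' * a')) :
    ∀ i j : ℕ, a' ^ i * b' ^ j = c.ι (ν ^ (i * j)) * (b' ^ j * a' ^ i) := by
  intro i j
  induction i with
  | zero => simp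
  | succ n ih =>
    calc a' ^ (n + 1) * b' ^ j = a' * (a' ^ n * b' ^ j) := by rw [pow_succ']; group
      _ = a' * (c.ι (ν ^ (n * j)) * (b' ^ j * a' ^ n)) := by rw [ih]
      _ = c.ι (ν ^ (n * j)) * (a' * b' ^ j * a' ^ n) := by
            rw [c.ι_shuffle (ν ^ (n * j)) a']; group
      _ = c.ι (ν ^ (n * j)) * (c.ι (ν ^ j) * (b' ^ j * a') * a' ^ n) := by
            rw [c.comm_aux a' b' ν h j]
      _ = c.ι (ν ^ ((n + 1) * j)) * (b' ^ j * a' ^ (n + 1)) := by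
            rw [← mul_assoc, ← mul_assoc, ← map_mul, ← pow_add]
            rw [show n * j + j = (n + 1) * j by ring, pow_succ]
            group

lemma comm_eq (q mv r : ℕ) (hq : q.Prime) (hR : ¬ (mv * r) ≡ 1 [MOD q])
    (g' a' b' : c.Ext) (hbq : b' ^ q = 1)
    (hca : g' * a' * g'⁻¹ = a' ^ mv) (hcb : g' * b' * g'⁻¹ = b' ^ r)
    (ν : kˣ) (h : a' * b' = c.ι ν * (b' * a')) : a' * b' = b' * a' := by
  have hνq : ν ^ q = 1 := by
    have h1 := c.comm_aux a' b' ν h q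
    rw [hbq, mul_one, one_mul] at h1
    have h2 : (1 : c.Ext) * a' = c.ι (ν ^ q) * a' := by rw [one_mul]; exact h1
    exact (c.ι_eq_one_iff _).mp (mul_right_cancel h2).symm
  have hconj : a' ^ mv * b' ^ r = c.ι ν * (b' ^ r * a' ^ mv) := by
    calc a' ^ mv * b' ^ r = (g' * a' * g'⁻¹) * (g' * b' * g'⁻¹) := by rw [hca, hcb]
      _ = g' * (a' * b') * g'⁻¹ := by group
      _ = g' * (c.ι ν * (b' * a')) * g'⁻¹ := by rw [h]
      _ = c.ι ν * (g' * (b' * a') * g'⁻¹) := by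
            calc g' * (c.ι ν * (b' * a')) * g'⁻¹ = g' * c.ι ν * (b' * a') * g'⁻¹ := by group
              _ = c.ι ν * g' * (b' * a') * g'⁻¹ := by rw [← c.ι_central]
              _ = c.ι ν * (g' * (b' * a') * g'⁻¹) := by group
      _ = c.ι ν * ((g' * b' * g'⁻¹) * (g' * a' * g'⁻¹)) := by group
      _ = c.ι ν * (b' ^ r * a' ^ mv) := by rw [hca, hcb]
  have h3 := c.comm_aux2 a' b' ν h mv r
  have h4 : c.ι (ν ^ (mv * r)) * (b' ^ r * a' ^ mv) = c.ι ν * (b' ^ r * a' ^ mv) := by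
    rw [← h3, hconj]
  have h5 : ν ^ (mv * r) = ν := c.ι_injective (mul_right_cancel h4)
  have hν1 : ν = 1 := by
    have hmod : mv * r ≡ 1 [MOD orderOf ν] := by
      have := pow_eq_pow_iff_modEq.mp (by rw [h5, pow_one] : ν ^ (mv * r) = ν ^ 1)
      exact this
    have hd : orderOf ν ∣ q := orderOf_dvd_of_pow_eq_one hνq
    rcases (Nat.Prime.eq_one_or_self_of_dvd hq _ hd) with h1 | h1
    · exact orderOf_eq_one_iff.mp h1
    · exact absurd (h1 ▸ hmod) hR
  rw [h, hν1, map_one, one_mul]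

end NC

/-! ### Arithmetic helpers -/

lemma pow_val_add {M : Type*} [LeftCancelMonoid M] {x : M} {n : ℕ} [NeZero n]
    (hx : x ^ n = 1) (u v : ZMod n) : x ^ (u + v).val = x ^ u.val * x ^ v.val := by
  rw [ZMod.val_add, ← pow_add]
  exact pow_congr_of_modEq hx (Nat.mod_modEq _ _)

lemma pow_val_mul {M : Type*} [LeftCancelMonoid M] {x : M} {n : ℕ} [NeZero n]
    (hx : x ^ n = 1) (u v : ZMod n) : x ^ (u * v).val = (x ^ u.val) ^ v.val := by
  rw [ZMod.val_mul, ← pow_mul]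
  exact pow_congr_of_modEq hx (Nat.mod_modEq _ _)

lemma pow_val_eq {M : Type*} [LeftCancelMonoid M] {x : M} {n : ℕ} [NeZero n]
    (hx : x ^ n = 1) (u : ZMod n) (j : ℕ) (hj : (j : ZMod n) = u) :
    x ^ u.val = x ^ j := by
  subst hj
  rw [ZMod.val_natCast]
  exact pow_congr_of_modEq hx (Nat.mod_modEq _ _)

lemma conj_pow_iter {M : Type*} [Group M] (g x : M) (mv : ℕ) (h : g * x * g⁻¹ = x ^ mv) :
    ∀ i j : ℕ, g ^ i * x ^ j * (g ^ i)⁻¹ = x ^ (mv ^ i * j) := by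
  intro i
  induction i with
  | zero => intro j; simp
  | succ n ih =>
    intro j
    calc g ^ (n + 1) * x ^ j * (g ^ (n + 1))⁻¹
        = g * (g ^ n * x ^ j * (g ^ n)⁻¹) * g⁻¹ := by group
      _ = g * x ^ (mv ^ n * j) * g⁻¹ := by rw [ih]
      _ = (g * x * g⁻¹) ^ (mv ^ n * j) := by rw [conj_pow]
      _ = x ^ (mv ^ (n + 1) * j) := by rw [h, ← pow_mul]; congr 1; ring

lemma conj_pow_move {M : Type*} [Group M] (g x : M) (mv : ℕ) (h : g * x * g⁻¹ = x ^ mv)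
    (i j : ℕ) : g ^ i * x ^ j = x ^ (mv ^ i * j) * g ^ i := by
  rw [← conj_pow_iter g x mv h i j]; group

/-! ### The splitting construction for the specific semidirect product -/

open Multiplicative SemidirectProduct in
lemma exists_splitting {k : Type*} [Field k] (p q : ℕ) (hp : p.Prime) (hq : q.Prime)
    (m : (ZMod q)ˣ) (lam : ℤ)
    (φ : Multiplicative (ZMod p) →* MulAut (Multiplicative (ZMod q × ZMod q)))
    (hφ : ∀ v : ZMod q × ZMod q,
      φ (ofAdd (1 : ZMod p)) (ofAdd v)
        = ofAdd ((m : ZMod q) * v.1, ((m ^ lam : (ZMod q)ˣ) : ZMod q) * v.2))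
    (c : NC k (SemidirectProduct (Multiplicative (ZMod q × ZMod q))
        (Multiplicative (ZMod p)) φ))
    (a' b' g' : c.Ext)
    (hax : a'.x = inl (ofAdd ((1 : ZMod q), (0 : ZMod q))))
    (hbx : b'.x = inl (ofAdd ((0 : ZMod q), (1 : ZMod q))))
    (hgx : g'.x = inr (ofAdd (1 : ZMod p)))
    (haq : a' ^ q = 1) (hbq : b' ^ q = 1) (hgp : g' ^ p = 1)
    (hca : g' * a' * g'⁻¹ = a' ^ ((m : ZMod q)).val)
    (hcb : g' * b' * g'⁻¹ = b' ^ (((m ^ lam : (ZMod q)ˣ) : ZMod q)).val)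
    (hab : a' * b' = b' * a') :
    ∃ s : (SemidirectProduct (Multiplicative (ZMod q × ZMod q))
        (Multiplicative (ZMod p)) φ) →* c.Ext, ∀ w, (s w).x = w := by
  haveI : NeZero p := ⟨hp.ne_zero⟩
  haveI : NeZero q := ⟨hq.ne_zero⟩
  set mq : ZMod q := (m : ZMod q) with hmq
  set R : ZMod q := ((m ^ lam : (ZMod q)ˣ) : ZMod q) with hR
  -- action of powers of the generator
  have hφj : ∀ (j : ℕ) (v : ZMod q × ZMod q),
      ((φ (ofAdd (1 : ZMod p))) ^ j) (ofAdd v) = ofAdd (mq ^ j * v.1, R ^ j * v.2) := by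
    intro j
    induction j with
    | zero => intro v; simp
    | succ n ih =>
      intro v
      rw [pow_succ']
      have : ((φ (ofAdd (1 : ZMod p))) * ((φ (ofAdd (1 : ZMod p))) ^ n)) (ofAdd v)
          = (φ (ofAdd (1 : ZMod p))) (((φ (ofAdd (1 : ZMod p))) ^ n) (ofAdd v)) := rfl
      rw [this, ih, hφ]
      simp only [pow_succ]
      congr 1
      ext <;> simp <;> ring
  have hofAdd_pow : ∀ i : ZMod p, ofAdd i = (ofAdd (1 : ZMod p)) ^ i.val := by
    intro i
    rw [← ofAdd_nsmul, nsmul_eq_mul, mul_one, ZMod.natCast_val, ZMod.cast_id]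
  have hφi : ∀ (h : Multiplicative (ZMod p)) (v : ZMod q × ZMod q),
      φ h (ofAdd v) = ofAdd (mq ^ (toAdd h).val * v.1, R ^ (toAdd h).val * v.2) := by
    intro h v
    calc φ h (ofAdd v) = ((φ (ofAdd (1 : ZMod p))) ^ (toAdd h).val) (ofAdd v) := by
          rw [← map_pow, ← hofAdd_pow, ofAdd_toAdd]
      _ = ofAdd (mq ^ (toAdd h).val * v.1, R ^ (toAdd h).val * v.2) := hφj _ v
  -- the section
  set S : (SemidirectProduct (Multiplicative (ZMod q × ZMod q))
      (Multiplicative (ZMod p)) φ) → c.Ext :=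
    fun w => a' ^ (toAdd w.left).1.val * b' ^ (toAdd w.left).2.val * g' ^ (toAdd w.right).val
    with hS
  have habC : Commute a' b' := hab
  have hSmul : ∀ w w', S (w * w') = S w * S w' := by
    intro w w'
    set n1 : ZMod q := (toAdd w.left).1
    set n2 : ZMod q := (toAdd w.left).2
    set i : ZMod p := toAdd w.right
    set n1' : ZMod q := (toAdd w'.left).1
    set n2' : ZMod q := (toAdd w'.left).2
    set i' : ZMod p := toAdd w'.right
    have hleft : toAdd ((w * w').left) = (n1 + mq ^ i.val * n1', n2 + R ^ i.val * n2') := by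
      rw [mul_left]
      rw [show w'.left = ofAdd (toAdd w'.left) from (ofAdd_toAdd _).symm]
      rw [hφi]
      rw [toAdd_mul, toAdd_ofAdd]
      rfl
    have hright : toAdd ((w * w').right) = i + i' := by
      rw [mul_right, toAdd_mul]
    -- powers of a' corresponding to the action
    have hmv : (((m : ZMod q).val ^ i.val * n1'.val : ℕ) : ZMod q) = mq ^ i.val * n1' := by
      push_cast
      rw [ZMod.natCast_val, ZMod.cast_id, ZMod.natCast_val, ZMod.cast_id]
    have hrv : ((((m ^ lam : (ZMod q)ˣ) : ZMod q).val ^ i.val * n2'.val : ℕ) : ZMod q)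
        = R ^ i.val * n2' := by
      push_cast
      rw [ZMod.natCast_val, ZMod.cast_id, ZMod.natCast_val, ZMod.cast_id]
    have hA : a' ^ ((mq ^ i.val * n1' : ZMod q)).val
        = a' ^ ((m : ZMod q).val ^ i.val * n1'.val) :=
      pow_val_eq haq _ _ hmv
    have hB : b' ^ ((R ^ i.val * n2' : ZMod q)).val
        = b' ^ (((m ^ lam : (ZMod q)ˣ) : ZMod q).val ^ i.val * n2'.val) :=
      pow_val_eq hbq _ _ hrv
    calc S (w * w')
        = a' ^ ((n1 + mq ^ i.val * n1' : ZMod q)).val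
          * b' ^ ((n2 + R ^ i.val * n2' : ZMod q)).val * g' ^ ((i + i' : ZMod p)).val := by
          rw [hS]; simp only [hleft, hright]
      _ = (a' ^ n1.val * a' ^ ((m : ZMod q).val ^ i.val * n1'.val))
          * (b' ^ n2.val * b' ^ (((m ^ lam : (ZMod q)ˣ) : ZMod q).val ^ i.val * n2'.val))
          * (g' ^ i.val * g' ^ i'.val) := by
          rw [pow_val_add haq, pow_val_add hbq, pow_val_add hgp, hA, hB]
      _ = (a' ^ n1.val * b' ^ n2.val * g' ^ i.val)
          * (a' ^ n1'.val * b' ^ n2'.val * g' ^ i'.val) := by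
          have key : (a' ^ n1.val * b' ^ n2.val * g' ^ i.val)
              * (a' ^ n1'.val * b' ^ n2'.val * g' ^ i'.val)
              = (a' ^ n1.val * a' ^ ((m : ZMod q).val ^ i.val * n1'.val))
              * (b' ^ n2.val * b' ^ (((m ^ lam : (ZMod q)ˣ) : ZMod q).val ^ i.val * n2'.val))
              * (g' ^ i.val * g' ^ i'.val) := by
            calc (a' ^ n1.val * b' ^ n2.val * g' ^ i.val)
                * (a' ^ n1'.val * b' ^ n2'.val * g' ^ i'.val)
                = a' ^ n1.val * b' ^ n2.val * (g' ^ i.val * a' ^ n1'.val)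
                  * b' ^ n2'.val * g' ^ i'.val := by group
              _ = a' ^ n1.val * b' ^ n2.val
                  * (a' ^ ((m : ZMod q).val ^ i.val * n1'.val) * g' ^ i.val)
                  * b' ^ n2'.val * g' ^ i'.val := by
                  rw [conj_pow_move g' a' _ hca]
              _ = a' ^ n1.val * b' ^ n2.val * a' ^ ((m : ZMod q).val ^ i.val * n1'.val)
                  * (g' ^ i.val * b' ^ n2'.val) * g' ^ i'.val := by group
              _ = a' ^ n1.val * b' ^ n2.val * a' ^ ((m : ZMod q).val ^ i.val * n1'.val)
                  * (b' ^ (((m ^ lam : (ZMod q)ˣ) : ZMod q).val ^ i.val * n2'.val) * g' ^ i.val)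
                  * g' ^ i'.val := by
                  rw [conj_pow_move g' b' _ hcb]
              _ = a' ^ n1.val * (b' ^ n2.val * a' ^ ((m : ZMod q).val ^ i.val * n1'.val))
                  * b' ^ (((m ^ lam : (ZMod q)ˣ) : ZMod q).val ^ i.val * n2'.val)
                  * (g' ^ i.val * g' ^ i'.val) := by group
              _ = a' ^ n1.val * (a' ^ ((m : ZMod q).val ^ i.val * n1'.val) * b' ^ n2.val)
                  * b' ^ (((m ^ lam : (ZMod q)ˣ) : ZMod q).val ^ i.val * n2'.val)
                  * (g' ^ i.val * g' ^ i'.val) := by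
                  rw [← (habC.pow_pow _ _).eq]
              _ = (a' ^ n1.val * a' ^ ((m : ZMod q).val ^ i.val * n1'.val))
                  * (b' ^ n2.val * b' ^ (((m ^ lam : (ZMod q)ˣ) : ZMod q).val ^ i.val * n2'.val))
                  * (g' ^ i.val * g' ^ i'.val) := by group
          rw [key]
      _ = S w * S w' := by rw [hS]
  refine ⟨MonoidHom.mk' S hSmul, ?_⟩
  intro w
  have e1 : (toAdd w.left).1.val • ((1 : ZMod q), (0 : ZMod q)) = ((toAdd w.left).1, 0) := by
    simp [Prod.smul_mk, nsmul_eq_mul, ZMod.natCast_val, ZMod.cast_id]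
  have e2 : (toAdd w.left).2.val • ((0 : ZMod q), (1 : ZMod q)) = (0, (toAdd w.left).2) := by
    simp [Prod.smul_mk, nsmul_eq_mul, ZMod.natCast_val, ZMod.cast_id]
  have e3 : (toAdd w.right).val • (1 : ZMod p) = toAdd w.right := by
    simp [nsmul_eq_mul, ZMod.natCast_val, ZMod.cast_id]
  have h1 : a'.x ^ (toAdd w.left).1.val
      = inl (ofAdd (((toAdd w.left).1 : ZMod q), (0 : ZMod q))) := by
    rw [hax, ← map_pow, ← ofAdd_nsmul, e1]
  have h2 : b'.x ^ (toAdd w.left).2.val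
      = inl (ofAdd ((0 : ZMod q), ((toAdd w.left).2 : ZMod q))) := by
    rw [hbx, ← map_pow, ← ofAdd_nsmul, e2]
  have h3 : g'.x ^ (toAdd w.right).val = inr (ofAdd (toAdd w.right)) := by
    rw [hgx, ← map_pow, ← ofAdd_nsmul, e3]
  show (S w).x = w
  rw [hS]
  simp only [NC.mul_x, NC.pow_x, h1, h2, h3]
  rw [← map_mul, ← ofAdd_add]
  have e4 : (((toAdd w.left).1, (0 : ZMod q)) + ((0 : ZMod q), (toAdd w.left).2))
      = ((toAdd w.left).1, (toAdd w.left).2) := by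
    refine Prod.ext ?_ ?_ <;> simp
  rw [e4, Prod.mk.eta, ofAdd_toAdd, ofAdd_toAdd, inl_left_mul_inr_right]

/-- Let `p, q` be distinct primes with `q ≡ 1 (mod p)`, `m` an element of multiplicative
order `p` in `(Z/q)ˣ`, and `λ` an integer with `λ ≢ −1 (mod p)`.  Let
`G = Z/p ⋉ (Z/q × Z/q)` be the semidirect product in which the generator `g` of `Z/p`
acts by `g·(i,j) = (m·i, m^λ·j)`.  Then `H²(G, kˣ) = 0`: every 2-cocycle on `G` with
values in `kˣ` is a coboundary. -/
theorem statement11 {k : Type*} [Field k] [IsAlgClosed k] [CharZero k]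
    (p q : ℕ) (hp : p.Prime) (hq : q.Prime) (hne : p ≠ q) (hmod : q % p = 1)
    (m : (ZMod q)ˣ) (hm : orderOf m = p)
    (lam : ℤ) (hlam : (lam : ZMod p) ≠ -1)
    (φ : Multiplicative (ZMod p) →* MulAut (Multiplicative (ZMod q × ZMod q)))
    (hφ : ∀ v : ZMod q × ZMod q,
      φ (Multiplicative.ofAdd (1 : ZMod p)) (Multiplicative.ofAdd v)
        = Multiplicative.ofAdd ((m : ZMod q) * v.1, ((m ^ lam : (ZMod q)ˣ) : ZMod q) * v.2))
    (β : SemidirectProduct (Multiplicative (ZMod q × ZMod q)) (Multiplicative (ZMod p)) φ →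
         SemidirectProduct (Multiplicative (ZMod q × ZMod q)) (Multiplicative (ZMod p)) φ → kˣ)
    (hβ : IsCocycle2 β) :
    IsCoboundary2 β := by
  open Multiplicative SemidirectProduct in
  · haveI : Fact q.Prime := ⟨hq⟩
    haveI : NeZero q := ⟨hq.ne_zero⟩
    haveI : NeZero p := ⟨hp.ne_zero⟩
    -- normalize the cocycle
    set c : NC k (SemidirectProduct (Multiplicative (ZMod q × ZMod q))
        (Multiplicative (ZMod p)) φ) :=
      { β := fun x y => β x y * (β 1 1)⁻¹
        coc := by
          intro x y z
          have h := hβ x y z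
          rw [mul_mul_mul_comm, h, ← mul_mul_mul_comm]
        norm := mul_inv_cancel _ } with hc
    -- arithmetic facts
    set mv : ℕ := ((m : ZMod q)).val with hmv
    set r : ℕ := (((m ^ lam : (ZMod q)ˣ) : ZMod q)).val with hr
    have hm_ne_one : (m : ZMod q) ≠ 1 := by
      intro h
      have hm1 : m = 1 := Units.ext (by simpa using h)
      rw [hm1, orderOf_one] at hm
      have := hp.one_lt
      omega
    have hmv_lt : mv < q := ZMod.val_lt _
    have hmv_ne0 : mv ≠ 0 := by
      intro h
      exact m.ne_zero ((ZMod.val_eq_zero _).mp h)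
    have hmv_cast : ((mv : ℕ) : ZMod q) = (m : ZMod q) := by
      rw [hmv, ZMod.natCast_val, ZMod.cast_id]
    have hmv_ne1 : mv ≠ 1 := by
      intro h
      apply hm_ne_one
      rw [← hmv_cast, h, Nat.cast_one]
    have hmv2 : 2 ≤ mv := by omega
    have hmvq : ¬ q ∣ (mv - 1) := by
      intro hd
      have := Nat.le_of_dvd (by omega) hd
      omega
    have hr_lt : r < q := ZMod.val_lt _
    have hr_ne0 : r ≠ 0 := by
      intro h
      exact (m ^ lam).ne_zero ((ZMod.val_eq_zero _).mp h)
    have hr_cast : ((r : ℕ) : ZMod q) = ((m ^ lam : (ZMod q)ˣ) : ZMod q) := by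
      rw [hr, ZMod.natCast_val, ZMod.cast_id]
    have hmr : ¬ (mv * r) ≡ 1 [MOD q] := by
      intro hmodeq
      have h1 : ((mv * r : ℕ) : ZMod q) = ((1 : ℕ) : ZMod q) :=
        (ZMod.natCast_eq_natCast_iff _ _ _).mpr hmodeq
      push_cast at h1
      rw [hmv_cast, hr_cast] at h1
      have h2 : ((m * m ^ lam : (ZMod q)ˣ) : ZMod q) = 1 := by rw [Units.val_mul]; exact h1
      have h3 : (m * m ^ lam : (ZMod q)ˣ) = 1 := Units.ext (by simpa using h2)
      have h4 : m ^ ((1 : ℤ) + lam) = 1 := by rw [zpow_add, zpow_one]; exact h3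
      have h5 : ((p : ℤ)) ∣ (1 + lam) := by
        rw [← hm]
        exact orderOf_dvd_iff_zpow_eq_one.mpr h4
      have h6 : (((1 : ℤ) + lam : ℤ) : ZMod p) = 0 :=
        (ZMod.intCast_zmod_eq_zero_iff_dvd _ _).mpr h5
      push_cast at h6
      apply hlam
      linear_combination h6
    -- elements of G
    set aG : SemidirectProduct (Multiplicative (ZMod q × ZMod q)) (Multiplicative (ZMod p)) φ :=
      inl (ofAdd ((1 : ZMod q), (0 : ZMod q))) with haGdef
    set bG : SemidirectProduct (Multiplicative (ZMod q × ZMod q)) (Multiplicative (ZMod p)) φ :=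
      inl (ofAdd ((0 : ZMod q), (1 : ZMod q))) with hbGdef
    set gG : SemidirectProduct (Multiplicative (ZMod q × ZMod q)) (Multiplicative (ZMod p)) φ :=
      inr (ofAdd (1 : ZMod p)) with hgGdef
    have haGq : aG ^ q = 1 := by
      rw [haGdef, ← map_pow, ← ofAdd_nsmul]
      have h : q • ((1 : ZMod q), (0 : ZMod q)) = 0 := by
        simp [Prod.smul_mk, nsmul_eq_mul, ZMod.natCast_self]
      rw [h, ofAdd_zero, map_one]
    have hbGq : bG ^ q = 1 := by
      rw [hbGdef, ← map_pow, ← ofAdd_nsmul]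
      have h : q • ((0 : ZMod q), (1 : ZMod q)) = 0 := by
        simp [Prod.smul_mk, nsmul_eq_mul, ZMod.natCast_self]
      rw [h, ofAdd_zero, map_one]
    have hgGp : gG ^ p = 1 := by
      rw [hgGdef, ← map_pow, ← ofAdd_nsmul]
      have h : p • (1 : ZMod p) = 0 := by
        simp [nsmul_eq_mul, ZMod.natCast_self]
      rw [h, ofAdd_zero, map_one]
    have hconjA : gG * aG * gG⁻¹ = aG ^ mv := by
      rw [haGdef, hgGdef, ← map_inv, ← inl_aut, hφ, ← map_pow, ← ofAdd_nsmul]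
      congr 2
      refine Prod.ext ?_ ?_ <;>
        simp [Prod.smul_mk, nsmul_eq_mul, hmv, ZMod.natCast_val, ZMod.cast_id]
    have hconjB : gG * bG * gG⁻¹ = bG ^ r := by
      rw [hbGdef, hgGdef, ← map_inv, ← inl_aut, hφ, ← map_pow, ← ofAdd_nsmul]
      congr 2
      refine Prod.ext ?_ ?_ <;>
        simp [Prod.smul_mk, nsmul_eq_mul, hr, ZMod.natCast_val, ZMod.cast_id]
    have hcommG : aG * bG = bG * aG := by
      have inlm : ∀ u v : Multiplicative (ZMod q × ZMod q),
          (inl u * inl v : SemidirectProduct (Multiplicative (ZMod q × ZMod q))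
            (Multiplicative (ZMod p)) φ) = inl (u * v) :=
        fun u v => (map_mul inl u v).symm
      rw [haGdef, hbGdef, inlm, inlm, mul_comm]
    -- lifts
    obtain ⟨g', hg'x, hg'p⟩ := c.exists_good_lift p hp.pos gG hgGp
    obtain ⟨a₁, ha₁x, ha₁q⟩ := c.exists_good_lift q hq.pos aG haGq
    obtain ⟨b₁, hb₁x, hb₁q⟩ := c.exists_good_lift q hq.pos bG hbGq
    have hax1 : (g' * a₁ * g'⁻¹).x = (a₁ ^ mv).x := by
      simp only [NC.mul_x, NC.inv_x, NC.pow_x, hg'x, ha₁x]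
      exact hconjA
    obtain ⟨μa, hμa⟩ := c.exists_iota_mul hax1
    obtain ⟨a', ha'x0, ha'q, hca⟩ := c.adjust_conj q mv hq hmv2 hmvq g' a₁ ha₁q μa hμa
    have ha'x : a'.x = aG := by rw [ha'x0, ha₁x]
    have hbx1 : (g' * b₁ * g'⁻¹).x = (b₁ ^ r).x := by
      simp only [NC.mul_x, NC.inv_x, NC.pow_x, hg'x, hb₁x]
      exact hconjB
    obtain ⟨μb, hμb⟩ := c.exists_iota_mul hbx1
    obtain ⟨b', hb'x, hb'q, hcb⟩ :
        ∃ b' : c.Ext, b'.x = bG ∧ b' ^ q = 1 ∧ g' * b' * g'⁻¹ = b' ^ r := by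
      by_cases hr1 : r = 1
      · refine ⟨b₁, hb₁x, hb₁q, ?_⟩
        rw [hr1, pow_one]
        refine c.conj_eq_self p q ((Nat.coprime_primes hp hq).mpr hne) g' b₁ hg'p hb₁q μb ?_
        rw [hr1, pow_one] at hμb
        exact hμb
      · have hr2 : 2 ≤ r := by omega
        have hrq : ¬ q ∣ (r - 1) := by
          intro hd
          have := Nat.le_of_dvd (by omega) hd
          omega
        obtain ⟨b', h1, h2, h3⟩ := c.adjust_conj q r hq hr2 hrq g' b₁ hb₁q μb hμb
        exact ⟨b', by rw [h1, hb₁x], h2, h3⟩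
    have habx : (a' * b').x = (b' * a').x := by
      simp only [NC.mul_x, ha'x, hb'x]
      exact hcommG
    obtain ⟨ν, hν⟩ := c.exists_iota_mul habx
    have hab' : a' * b' = b' * a' := c.comm_eq q mv r hq hmr g' a' b' hb'q hca hcb ν hν
    -- splitting
    obtain ⟨s, hs⟩ := exists_splitting p q hp hq m lam φ hφ c a' b' g'
      (by rw [ha'x, haGdef]) (by rw [hb'x, hbGdef]) (by rw [hg'x, hgGdef])
      ha'q hb'q hg'p hca hcb hab'
    have hco : IsCoboundary2 c.β := c.isCoboundary_of_splits s hs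
    obtain ⟨f, hf⟩ := hco
    refine ⟨fun x => β 1 1 * f x, fun x y => ?_⟩
    have h : β x y * (β 1 1)⁻¹ = f x * f y * (f (x * y))⁻¹ := hf x y
    have h2 : β x y = f x * f y * (f (x * y))⁻¹ * β 1 1 := by
      rw [← h]
      group
    simp only
    rw [h2, mul_inv]
    simp [mul_comm, mul_left_comm, mul_assoc]
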